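/- arXiv:0811.0699 — 5 statements merged into one kernel-verified Lean document; each statement's English description precedes it below -/
import Mathlib

section
/- For every Boolean function f : {0,1}^n → {0,1}, the inversion complexity of f in formulas equals the decrease of f; that is, the minimum number of NOT operators over all Boolean formulas computing f is exactly d(f). -/
namespace InversionComplexity

open Classical

/-- A chain is a strictly increasing sequence of Boolean vectors in `{0,1}^n`
(pointwise order on `Fin n → Bool`). -/
def IsChain {n : ℕ} (X : List (Fin n → Bool)) : Prop :=
  X.Chain' (· < ·)

/-- The decrease `d_X(f)` of `f` on a sequence `X`: the number of consecutive
indices `i` with `f (x^i) = 1` and `f (x^{i+1}) = 0`. -/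
def decOn {n : ℕ} (f : (Fin n → Bool) → Bool) : List (Fin n → Bool) → ℕ
  | a :: b :: t => (if f a = true ∧ f b = false then 1 else 0) + decOn f (b :: t)
  | _ => 0

/-- The decrease `d(f)` of `f`: the maximum of `d_X(f)` over all chains `X`. -/
noncomputable def dec {n : ℕ} (f : (Fin n → Bool) → Bool) : ℕ :=
  sSup { m | ∃ X : List (Fin n → Bool), IsChain X ∧ decOn f X = m }

/-- Boolean formulas: finite trees built from variable leaves, constant leaves,
binary AND/OR nodes and unary NOT nodes. -/
inductive Formula (n : ℕ) : Type
  | var : Fin n → Formula n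
  | const : Bool → Formula n
  | and : Formula n → Formula n → Formula n
  | or : Formula n → Formula n → Formula n
  | not : Formula n → Formula n

/-- Evaluation of a formula on an input. -/
def Formula.eval {n : ℕ} (x : Fin n → Bool) : Formula n → Bool
  | .var i => x i
  | .const b => b
  | .and C D => C.eval x && D.eval x
  | .or C D => C.eval x || D.eval x
  | .not C => !(C.eval x)

/-- `not(C)`: the number of NOT nodes of a formula. -/
def Formula.notCount {n : ℕ} : Formula n → ℕ
  | .var _ => 0
  | .const _ => 0
  | .and C D => C.notCount + D.notCount
  | .or C D => C.notCount + D.notCount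
  | .not C => C.notCount + 1

/-- `not_d(C, x)`: the number of NOT nodes of `C` in the *down* state on input `x`,
i.e. whose input subformula evaluates to `1`. -/
def Formula.notDown {n : ℕ} (x : Fin n → Bool) : Formula n → ℕ
  | .var _ => 0
  | .const _ => 0
  | .and C D => C.notDown x + D.notDown x
  | .or C D => C.notDown x + D.notDown x
  | .not C => C.notDown x + (if C.eval x = true then 1 else 0)

/-- A formula computes a Boolean function `f` if it evaluates to `f x` on every input `x`. -/
def Formula.Computes {n : ℕ} (C : Formula n) (f : (Fin n → Bool) → Bool) : Prop :=
  ∀ x, C.eval x = f x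

/-- `I_f(f)`: the inversion complexity of `f` in formulas, the minimum number of
NOT nodes over all formulas computing `f`. -/
noncomputable def invFormula {n : ℕ} (f : (Fin n → Bool) → Bool) : ℕ :=
  sInf { k | ∃ C : Formula n, C.Computes f ∧ C.notCount = k }

/-- The set `S` of all vectors `x` such that every chain starting with `x`
has decrease `0` with respect to `f`. -/
def startSet {n : ℕ} (f : (Fin n → Bool) → Bool) : Set (Fin n → Bool) :=
  { x | ∀ X : List (Fin n → Bool), IsChain X → X.head? = some x → decOn f X = 0 }

section Aux

variable {n : ℕ}

lemma decOn_nil (f : (Fin n → Bool) → Bool) : decOn f [] = 0 := rfl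
lemma decOn_single (f : (Fin n → Bool) → Bool) (a) : decOn f [a] = 0 := rfl
lemma decOn_cons_cons (f : (Fin n → Bool) → Bool) (a b t) :
    decOn f (a :: b :: t) = (if f a = true ∧ f b = false then 1 else 0) + decOn f (b :: t) := rfl

lemma bool_le_iff {a b : Bool} : a ≤ b ↔ (a = true → b = true) := by
  cases a <;> cases b <;> simp

/-- weight of a vector -/
def wt {n : ℕ} (x : Fin n → Bool) : ℕ := (Finset.univ.filter (fun i => x i = true)).card

lemma wt_le (x : Fin n → Bool) : wt x ≤ n := by
  calc wt x ≤ (Finset.univ : Finset (Fin n)).card := Finset.card_filter_le _ _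
  _ = n := by simp

lemma wt_lt_of_lt {x y : Fin n → Bool} (h : x < y) : wt x < wt y := by
  have hle := le_of_lt h
  have hne := ne_of_lt h
  have hsub : (Finset.univ.filter (fun i => x i = true)) ⊆ (Finset.univ.filter (fun i => y i = true)) := by
    intro i hi
    simp only [Finset.mem_filter, Finset.mem_univ, true_and] at hi ⊢
    exact bool_le_iff.mp (hle i) hi
  obtain ⟨i, hi⟩ := Function.ne_iff.mp hne
  have hxi : x i = false ∧ y i = true := by
    have := hle i
    cases hx : x i <;> cases hy : y i <;> simp_all <;> exact absurd this (by simp)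
  apply Finset.card_lt_card
  rw [Finset.ssubset_iff_of_subset hsub]
  exact ⟨i, by simp [hxi.2], by simp [hxi.1]⟩

lemma decOn_add_wt (f : (Fin n → Bool) → Bool) :
    ∀ (t : List (Fin n → Bool)) (a), IsChain (a :: t) → decOn f (a :: t) + wt a ≤ n
  | [], a, _ => by simpa [decOn_single] using wt_le a
  | b :: t, a, hc => by
    have hc' : IsChain (b :: t) := (List.isChain_cons_cons.mp hc).2
    have hab : a < b := (List.isChain_cons_cons.mp hc).1
    have ih := decOn_add_wt f t b hc'
    have hw := wt_lt_of_lt hab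
    rw [decOn_cons_cons]
    split <;> omega

lemma decOn_le_n (f : (Fin n → Bool) → Bool) (X : List (Fin n → Bool)) (h : IsChain X) :
    decOn f X ≤ n := by
  cases X with
  | nil => simp [decOn_nil]
  | cons a t => have := decOn_add_wt f t a h; omega

lemma dec_set_nonempty (f : (Fin n → Bool) → Bool) :
    { m | ∃ X : List (Fin n → Bool), IsChain X ∧ decOn f X = m }.Nonempty :=
  ⟨0, [], List.isChain_nil, rfl⟩

lemma dec_set_bdd (f : (Fin n → Bool) → Bool) :
    BddAbove { m | ∃ X : List (Fin n → Bool), IsChain X ∧ decOn f X = m } :=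
  ⟨n, fun m ⟨X, hX, hm⟩ => hm ▸ decOn_le_n f X hX⟩

lemma decOn_le_dec (f : (Fin n → Bool) → Bool) {X : List (Fin n → Bool)} (hX : IsChain X) :
    decOn f X ≤ dec f :=
  le_csSup (dec_set_bdd f) ⟨X, hX, rfl⟩

/-- pointwise domination for binary gates -/
lemma decOn_le_add (f g h : (Fin n → Bool) → Bool)
    (hpt : ∀ a b, f a = true → f b = false →
      (g a = true ∧ g b = false) ∨ (h a = true ∧ h b = false)) :
    ∀ X, decOn f X ≤ decOn g X + decOn h X
  | [] => le_refl 0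
  | [a] => le_refl 0
  | a :: b :: t => by
    have ih := decOn_le_add f g h hpt (b :: t)
    rw [decOn_cons_cons f, decOn_cons_cons g, decOn_cons_cons h]
    by_cases hf : f a = true ∧ f b = false
    · rcases hpt a b hf.1 hf.2 with hg | hh
      · rw [if_pos hf, if_pos hg]; omega
      · rw [if_pos hf, if_pos hh]; omega
    · rw [if_neg hf]; omega

lemma decOn_not_aux (g : (Fin n → Bool) → Bool) :
    ∀ X, decOn (fun x => !g x) X ≤ decOn g X +
      (match X with | a :: _ => if g a = true then 0 else 1 | [] => 0)
  | [] => le_refl 0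
  | [a] => by simp [decOn_single]
  | a :: b :: t => by
    have ih := decOn_not_aux g (b :: t)
    rw [decOn_cons_cons, decOn_cons_cons g]
    simp only at ih ⊢
    cases ha : g a <;> cases hb : g b <;> simp [ha, hb] at ih ⊢ <;> omega

lemma decOn_not_le (g : (Fin n → Bool) → Bool) (X : List (Fin n → Bool)) :
    decOn (fun x => !g x) X ≤ decOn g X + 1 := by
  have := decOn_not_aux g X
  match X with
  | [] => simpa using Nat.le_succ_of_le this
  | a :: t =>
    simp only at this
    split at this <;> omega

end Aux
section Lower

variable {n : ℕ}

lemma decOn_mono_zero (g : (Fin n → Bool) → Bool)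
    (hmono : ∀ a b : Fin n → Bool, a < b → g a = true → g b = true) :
    ∀ X : List (Fin n → Bool), IsChain X → decOn g X = 0
  | [] , _ => rfl
  | [a], _ => rfl
  | a :: b :: t, hc => by
    have hab : a < b := (List.isChain_cons_cons.mp hc).1
    have ih := decOn_mono_zero g hmono (b :: t) (List.isChain_cons_cons.mp hc).2
    rw [decOn_cons_cons, ih]
    have : ¬(g a = true ∧ g b = false) := by
      rintro ⟨h1, h2⟩
      rw [hmono a b hab h1] at h2
      exact Bool.noConfusion h2
    rw [if_neg this]

lemma decOn_eval_le (C : Formula n) :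
    ∀ X : List (Fin n → Bool), IsChain X → decOn (fun x => C.eval x) X ≤ C.notCount := by
  induction C with
  | var i =>
    intro X hX
    have : decOn (fun x : Fin n → Bool => (Formula.var i).eval x) X = 0 := by
      apply decOn_mono_zero _ _ X hX
      intro a b hab h1
      have := bool_le_iff.mp (le_of_lt hab i)
      simpa [Formula.eval] using this (by simpa [Formula.eval] using h1)
    simp [this, Formula.notCount]
  | const b =>
    intro X hX
    have : decOn (fun x : Fin n → Bool => (Formula.const b).eval x) X = 0 := by
      apply decOn_mono_zero _ _ X hX
      intro a c _ h1
      simpa [Formula.eval] using h1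
    simp [this, Formula.notCount]
  | and C D ihC ihD =>
    intro X hX
    have hle := decOn_le_add (fun x => (Formula.and C D).eval x)
      (fun x => C.eval x) (fun x => D.eval x) ?_ X
    · calc decOn (fun x => (Formula.and C D).eval x) X
          ≤ decOn (fun x => C.eval x) X + decOn (fun x => D.eval x) X := hle
        _ ≤ C.notCount + D.notCount := Nat.add_le_add (ihC X hX) (ihD X hX)
        _ = (Formula.and C D).notCount := rfl
    · intro a b ha hb
      simp only [Formula.eval, Bool.and_eq_true, Bool.and_eq_false_iff] at ha hb
      rcases hb with hb | hb
      · exact Or.inl ⟨ha.1, hb⟩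
      · exact Or.inr ⟨ha.2, hb⟩
  | or C D ihC ihD =>
    intro X hX
    have hle := decOn_le_add (fun x => (Formula.or C D).eval x)
      (fun x => C.eval x) (fun x => D.eval x) ?_ X
    · calc decOn (fun x => (Formula.or C D).eval x) X
          ≤ decOn (fun x => C.eval x) X + decOn (fun x => D.eval x) X := hle
        _ ≤ C.notCount + D.notCount := Nat.add_le_add (ihC X hX) (ihD X hX)
        _ = (Formula.or C D).notCount := rfl
    · intro a b ha hb
      simp only [Formula.eval, Bool.or_eq_true, Bool.or_eq_false_iff] at ha hb
      rcases ha with ha | ha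
      · exact Or.inl ⟨ha, hb.1⟩
      · exact Or.inr ⟨ha, hb.2⟩
  | not C ihC =>
    intro X hX
    have h1 : decOn (fun x => (Formula.not C).eval x) X
        ≤ decOn (fun x => C.eval x) X + 1 := decOn_not_le _ X
    have := ihC X hX
    simp only [Formula.notCount]
    omega

end Lower
section Dnf

variable {n : ℕ}

/-- conjunction of the variables that are true in `x`, restricted to index list `l` -/
def listAnd (x : Fin n → Bool) : List (Fin n) → Formula n
  | [] => .const true
  | i :: l => if x i = true then .and (.var i) (listAnd x l) else listAnd x l

/-- disjunction of the minterms of the true points of `f` in list `l` -/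
def listOr (f : (Fin n → Bool) → Bool) : List (Fin n → Bool) → Formula n
  | [] => .const false
  | v :: l => if f v = true then .or (listAnd v (List.finRange n)) (listOr f l) else listOr f l

/-- monotone DNF formula for `f` -/
noncomputable def dnf (f : (Fin n → Bool) → Bool) : Formula n :=
  listOr f (Finset.univ : Finset (Fin n → Bool)).toList

lemma notCount_listAnd (x : Fin n → Bool) : ∀ l, (listAnd x l).notCount = 0
  | [] => rfl
  | i :: l => by
    rw [listAnd]
    split
    · show (Formula.var i).notCount + (listAnd x l).notCount = 0
      simp [Formula.notCount, notCount_listAnd x l]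
    · exact notCount_listAnd x l

lemma notCount_listOr (f : (Fin n → Bool) → Bool) : ∀ l, (listOr f l).notCount = 0
  | [] => rfl
  | v :: l => by
    rw [listOr]
    split
    · show (listAnd v (List.finRange n)).notCount + (listOr f l).notCount = 0
      simp [notCount_listAnd, notCount_listOr f l]
    · exact notCount_listOr f l

lemma notCount_dnf (f : (Fin n → Bool) → Bool) : (dnf f).notCount = 0 :=
  notCount_listOr f _

lemma eval_listAnd (x y : Fin n → Bool) :
    ∀ l, (listAnd x l).eval y = true ↔ (∀ i ∈ l, x i = true → y i = true)
  | [] => by simp [listAnd, Formula.eval]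
  | i :: l => by
    rw [listAnd]
    by_cases hx : x i = true
    · rw [if_pos hx]
      show (y i && (listAnd x l).eval y) = true ↔ _
      rw [Bool.and_eq_true, eval_listAnd x y l]
      constructor
      · rintro ⟨hy, h⟩ j hj
        rcases List.mem_cons.mp hj with rfl | hj
        · intro _; exact hy
        · exact h j hj
      · intro h
        exact ⟨h i (List.mem_cons_self) hx, fun j hj => h j (List.mem_cons_of_mem i hj)⟩
    · rw [if_neg hx]
      rw [eval_listAnd x y l]
      constructor
      · intro h j hj
        rcases List.mem_cons.mp hj with rfl | hj
        · intro h'; exact absurd h' hx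
        · exact h j hj
      · intro h j hj; exact h j (List.mem_cons_of_mem i hj)

lemma eval_listAnd_univ (x y : Fin n → Bool) :
    (listAnd x (List.finRange n)).eval y = true ↔ x ≤ y := by
  rw [eval_listAnd]
  constructor
  · intro h i
    exact bool_le_iff.mpr (h i (List.mem_finRange i))
  · intro h i _
    exact bool_le_iff.mp (h i)

lemma eval_listOr (f : (Fin n → Bool) → Bool) (y : Fin n → Bool) :
    ∀ l, (listOr f l).eval y = true ↔ ∃ v ∈ l, f v = true ∧ v ≤ y
  | [] => by simp [listOr, Formula.eval]
  | v :: l => by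
    rw [listOr]
    by_cases hv : f v = true
    · rw [if_pos hv]
      simp only [Formula.eval, Bool.or_eq_true, eval_listAnd_univ, eval_listOr f y l,
        List.mem_cons]
      constructor
      · rintro (h | ⟨w, hw, hfw, hwy⟩)
        · exact ⟨v, Or.inl rfl, hv, h⟩
        · exact ⟨w, Or.inr hw, hfw, hwy⟩
      · rintro ⟨w, (rfl | hw), hfw, hwy⟩
        · exact Or.inl hwy
        · exact Or.inr ⟨w, hw, hfw, hwy⟩
    · rw [if_neg hv]
      rw [eval_listOr f y l]
      constructor
      · rintro ⟨w, hw, hfw, hwy⟩; exact ⟨w, by simp [hw], hfw, hwy⟩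
      · rintro ⟨w, hw, hfw, hwy⟩
        rcases List.mem_cons.mp hw with rfl | hw
        · exact absurd hfw hv
        · exact ⟨w, hw, hfw, hwy⟩

lemma eval_dnf (f : (Fin n → Bool) → Bool) (y : Fin n → Bool) :
    (dnf f).eval y = true ↔ ∃ v, f v = true ∧ v ≤ y := by
  rw [dnf, eval_listOr]
  constructor
  · rintro ⟨v, _, hv⟩; exact ⟨v, hv⟩
  · rintro ⟨v, hv⟩; exact ⟨v, by simp [Finset.mem_toList], hv⟩

lemma dnf_computes (f : (Fin n → Bool) → Bool)
    (hmono : ∀ x y : Fin n → Bool, x ≤ y → f x = true → f y = true) :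
    (dnf f).Computes f := by
  intro y
  cases hfy : f y with
  | true => exact (eval_dnf f y).mpr ⟨y, hfy, le_refl y⟩
  | false =>
    rw [Bool.eq_false_iff]
    intro h
    obtain ⟨v, hfv, hvy⟩ := (eval_dnf f y).mp h
    rw [hmono v y hvy hfv] at hfy
    exact Bool.noConfusion hfy

lemma mono_of_dec0 (f : (Fin n → Bool) → Bool)
    (hd : ∀ X : List (Fin n → Bool), IsChain X → decOn f X = 0) :
    ∀ x y : Fin n → Bool, x ≤ y → f x = true → f y = true := by
  intro x y hxy hfx
  rcases eq_or_lt_of_le hxy with rfl | hlt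
  · exact hfx
  · have hchain : IsChain [x, y] := by
      simp [IsChain, List.Chain', List.isChain_cons_cons, hlt]
    have := hd [x, y] hchain
    rw [decOn_cons_cons, decOn_single] at this
    by_contra hfy
    rw [if_pos ⟨hfx, Bool.eq_false_iff.mpr hfy⟩] at this
    omega

end Dnf
section Upper

variable {n : ℕ}

lemma mem_startSet_iff {f : (Fin n → Bool) → Bool} {x : Fin n → Bool} :
    x ∈ startSet f ↔ ∀ X : List (Fin n → Bool), IsChain X → X.head? = some x → decOn f X = 0 :=
  Iff.rfl

lemma startSet_up {f : (Fin n → Bool) → Bool} {x y : Fin n → Bool}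
    (hx : x ∈ startSet f) (hle : x ≤ y) : y ∈ startSet f := by
  rcases eq_or_lt_of_le hle with rfl | hlt
  · exact hx
  · intro X hX hhead
    cases X with
    | nil => simp at hhead
    | cons b t =>
      have hb : b = y := by simpa using hhead
      subst hb
      have hchain : IsChain (x :: b :: t) := List.isChain_cons_cons.mpr ⟨hlt, hX⟩
      have h0 := hx (x :: b :: t) hchain rfl
      rw [decOn_cons_cons] at h0
      omega

lemma exists_chain_of_not_mem {f : (Fin n → Bool) → Bool} {b : Fin n → Bool}
    (hb : b ∉ startSet f) :
    ∃ Z : List (Fin n → Bool), IsChain Z ∧ Z.head? = some b ∧ decOn f Z ≠ 0 := by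
  rw [mem_startSet_iff] at hb
  push_neg at hb
  exact hb

/-- The key chain-extension claim. -/
lemma chain_extend (f h : (Fin n → Bool) → Bool)
    (hstep : ∀ a b : Fin n → Bool, a < b → h a = true → h b = false →
      f a = true ∧ f b = false ∧ b ∉ startSet f) :
    ∀ (t : List (Fin n → Bool)) (a), IsChain (a :: t) →
      ∃ Y : List (Fin n → Bool), IsChain Y ∧ Y.head? = some a ∧
        decOn h (a :: t) + (if decOn h (a :: t) = 0 then 0 else 1) ≤ decOn f Y
  | [], a, _ => ⟨[a], List.isChain_singleton a, rfl, by simp [decOn_single]⟩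
  | b :: t, a, hc => by
    have hab : a < b := (List.isChain_cons_cons.mp hc).1
    have hc' : IsChain (b :: t) := (List.isChain_cons_cons.mp hc).2
    obtain ⟨Y', hY'chain, hY'head, hY'⟩ := chain_extend f h hstep t b hc'
    obtain ⟨Yt, rfl⟩ : ∃ Yt, Y' = b :: Yt := by
      cases Y' with
      | nil => simp at hY'head
      | cons y Yt =>
        obtain rfl : y = b := by simpa using hY'head
        exact ⟨Yt, rfl⟩
    rw [decOn_cons_cons]
    by_cases hd : h a = true ∧ h b = false
    · obtain ⟨hfa, hfb, hbS⟩ := hstep a b hab hd.1 hd.2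
      rw [if_pos hd]
      have hcond : ¬(1 + decOn h (b :: t) = 0) := by omega
      rw [if_neg hcond]
      by_cases hm : decOn h (b :: t) = 0
      · -- use a chain witnessing b ∉ startSet
        obtain ⟨Z, hZchain, hZhead, hZne⟩ := exists_chain_of_not_mem hbS
        obtain ⟨Zt, rfl⟩ : ∃ Zt, Z = b :: Zt := by
          cases Z with
          | nil => simp at hZhead
          | cons z Zt =>
            obtain rfl : z = b := by simpa using hZhead
            exact ⟨Zt, rfl⟩
        refine ⟨a :: b :: Zt, List.isChain_cons_cons.mpr ⟨hab, hZchain⟩, rfl, ?_⟩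
        rw [decOn_cons_cons f, if_pos (⟨hfa, hfb⟩ : f a = true ∧ f b = false)]
        omega
      · refine ⟨a :: b :: Yt, List.isChain_cons_cons.mpr ⟨hab, hY'chain⟩, rfl, ?_⟩
        rw [decOn_cons_cons f, if_pos (⟨hfa, hfb⟩ : f a = true ∧ f b = false)]
        rw [if_neg hm] at hY'
        omega
    · rw [if_neg hd]
      refine ⟨a :: b :: Yt, List.isChain_cons_cons.mpr ⟨hab, hY'chain⟩, rfl, ?_⟩
      rw [decOn_cons_cons f]
      split at hY' <;> split <;> split <;> omega

lemma decOn_h_le (f h : (Fin n → Bool) → Bool) (d : ℕ)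
    (hf : ∀ X : List (Fin n → Bool), IsChain X → decOn f X ≤ d + 1)
    (hstep : ∀ a b : Fin n → Bool, a < b → h a = true → h b = false →
      f a = true ∧ f b = false ∧ b ∉ startSet f) :
    ∀ X : List (Fin n → Bool), IsChain X → decOn h X ≤ d := by
  intro X hX
  cases X with
  | nil => simp [decOn_nil]
  | cons a t =>
    obtain ⟨Y, hYchain, _, hY⟩ := chain_extend f h hstep t a hX
    have := hf Y hYchain
    by_cases h0 : decOn h (a :: t) = 0
    · omega
    · rw [if_neg h0] at hY
      omega

lemma upper (d : ℕ) :
    ∀ f : (Fin n → Bool) → Bool, (∀ X : List (Fin n → Bool), IsChain X → decOn f X ≤ d) →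
      ∃ C : Formula n, C.Computes f ∧ C.notCount ≤ d := by
  induction d with
  | zero =>
    intro f hf
    refine ⟨dnf f, dnf_computes f (mono_of_dec0 f fun X hX => Nat.le_zero.mp (hf X hX)), ?_⟩
    simp [notCount_dnf]
  | succ d ih =>
    intro f hf
    set s : (Fin n → Bool) → Bool := fun x => decide (x ∈ startSet f) with hs_def
    set r : (Fin n → Bool) → Bool :=
      fun x => decide (∃ z, z ≤ x ∧ z ∈ startSet f ∧ f z = true) with hr_def
    set h : (Fin n → Bool) → Bool := fun x => f x || s x with hh_def
    have hs_mem : ∀ x, s x = true ↔ x ∈ startSet f := by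
      intro x; simp [hs_def]
    have hs_mono : ∀ x y : Fin n → Bool, x ≤ y → s x = true → s y = true := by
      intro x y hxy hx
      exact (hs_mem y).mpr (startSet_up ((hs_mem x).mp hx) hxy)
    have hr_mono : ∀ x y : Fin n → Bool, x ≤ y → r x = true → r y = true := by
      intro x y hxy hx
      simp only [hr_def, decide_eq_true_eq] at hx ⊢
      obtain ⟨z, hzx, hzS, hfz⟩ := hx
      exact ⟨z, le_trans hzx hxy, hzS, hfz⟩
    have hr_eq : ∀ x, x ∈ startSet f → r x = f x := by
      intro x hxS
      cases hfx : f x with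
      | true =>
        simp only [hr_def, decide_eq_true_eq]
        exact ⟨x, le_refl x, hxS, hfx⟩
      | false =>
        simp only [hr_def, decide_eq_false_iff_not]
        rintro ⟨z, hzx, hzS, hfz⟩
        rcases eq_or_lt_of_le hzx with rfl | hlt
        · rw [hfz] at hfx; exact Bool.noConfusion hfx
        · have hchain : IsChain [z, x] := by simp [IsChain, List.Chain', List.isChain_cons_cons, hlt]
          have h0 := hzS [z, x] hchain rfl
          rw [decOn_cons_cons, decOn_single, if_pos ⟨hfz, hfx⟩] at h0
          omega
    have hstep : ∀ a b : Fin n → Bool, a < b → h a = true → h b = false →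
        f a = true ∧ f b = false ∧ b ∉ startSet f := by
      intro a b hab hha hhb
      simp only [hh_def, Bool.or_eq_false_iff] at hhb
      obtain ⟨hfb, hsb⟩ := hhb
      have hbS : b ∉ startSet f := fun hb => by
        rw [(hs_mem b).mpr hb] at hsb; exact Bool.noConfusion hsb
      have hsa : s a = false := by
        cases hsa : s a with
        | false => rfl
        | true =>
          rw [hs_mono a b (le_of_lt hab) hsa] at hsb
          exact Bool.noConfusion hsb
      simp only [hh_def, hsa, Bool.or_false] at hha
      exact ⟨hha, hfb, hbS⟩
    obtain ⟨Ch, hCh, hChn⟩ := ih h (decOn_h_le f h d hf hstep)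
    refine ⟨.and Ch (.or (.not (dnf s)) (dnf r)), ?_, ?_⟩
    · intro x
      have hMs := dnf_computes s hs_mono x
      have hMr := dnf_computes r hr_mono x
      show (Ch.eval x && (!(dnf s).eval x || (dnf r).eval x)) = f x
      rw [hCh x, hMs, hMr]
      cases hsx : s x with
      | false =>
        have hxf : h x = f x := by simp [hh_def, hsx]
        simp [hxf]
      | true =>
        have hxS : x ∈ startSet f := (hs_mem x).mp hsx
        have hhx : h x = true := by simp [hh_def, hsx]
        simp [hhx, hr_eq x hxS]
    · show Ch.notCount + (((dnf s).notCount + 1) + (dnf r).notCount) ≤ d + 1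
      rw [notCount_dnf, notCount_dnf]
      omega

end Upper
/-- The inversion complexity of every Boolean function `f` in formulas equals
the decrease `d(f)` of `f`. -/
theorem inversion_complexity_in_formulas (n : ℕ) (f : (Fin n → Bool) → Bool) :
    invFormula f = dec f := by
  obtain ⟨C, hC, hCn⟩ := upper (dec f) f (fun X hX => decOn_le_dec f hX)
  apply le_antisymm
  · exact le_trans (Nat.sInf_le ⟨C, hC, rfl⟩) hCn
  · have hne : {k | ∃ C : Formula n, C.Computes f ∧ C.notCount = k}.Nonempty :=
      ⟨C.notCount, C, hC, rfl⟩
    obtain ⟨C₀, hC₀, hC₀n⟩ : invFormula f ∈ {k | ∃ C : Formula n, C.Computes f ∧ C.notCount = k} :=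
      Nat.sInf_mem hne
    apply csSup_le (dec_set_nonempty f)
    rintro m ⟨X, hX, rfl⟩
    have hfe : (fun x => C₀.eval x) = f := funext hC₀
    calc decOn f X = decOn (fun x => C₀.eval x) X := by rw [hfe]
      _ ≤ C₀.notCount := decOn_eval_le C₀ X hX
      _ = invFormula f := hC₀n

end InversionComplexity
end

section
/- For every Boolean function f : {0,1}^n → {0,1}, there exists a Boolean formula C computing f with not(C) ≤ d(f); that is, d(f) NOT operators suffice to represent f by a Boolean formula. -/
namespace InversionComplexity

open Classical

section Aux
variable {n : ℕ}

lemma decOn_le_length (f : (Fin n → Bool) → Bool) :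
    ∀ X : List (Fin n → Bool), decOn f X ≤ X.length
  | [] => by simp [decOn]
  | [a] => by simp [decOn]
  | a :: b :: t => by
    have h := decOn_le_length f (b :: t)
    have he : decOn f (a :: b :: t)
        = (if f a = true ∧ f b = false then 1 else 0) + decOn f (b :: t) := rfl
    simp only [List.length] at *
    split at he <;> omega

lemma isChain_length_le {X : List (Fin n → Bool)} (h : IsChain X) : X.length ≤ n + 1 := by
  classical
  set w : (Fin n → Bool) → ℕ := fun x => (Finset.univ.filter fun i => x i = true).card with hw
  have hmono : ∀ a b : Fin n → Bool, a < b → w a < w b := by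
    intro a b hab
    apply Finset.card_lt_card
    obtain ⟨hle, hne⟩ := lt_iff_le_and_ne.mp hab
    constructor
    · intro i hi
      simp only [hw, Finset.mem_filter, Finset.mem_univ, true_and] at hi ⊢
      have h2 := hle i
      rw [hi] at h2
      exact (le_antisymm h2 (Bool.le_true _)).symm
    · intro hsub
      apply hne
      funext i
      have h1 := hle i
      by_cases hb : b i = true
      · have h2 := hsub (Finset.mem_filter.mpr ⟨Finset.mem_univ i, hb⟩)
        simp only [hw, Finset.mem_filter] at h2
        rw [h2.2, hb]
      · simp only [Bool.not_eq_true] at hb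
        rw [hb] at h1
        rw [hb]
        exact le_antisymm h1 (Bool.false_le _)
  have h' : X.Chain' (· < ·) := h
  have hchain : (X.map w).Chain' (· < ·) := List.isChain_map_of_isChain w hmono h'
  have hpw : (X.map w).Pairwise (· < ·) := List.isChain_iff_pairwise.mp hchain
  have hnd : (X.map w).Nodup := hpw.imp Nat.ne_of_lt
  have hsub : (X.map w).toFinset ⊆ Finset.range (n + 1) := by
    intro m hm
    rw [List.mem_toFinset, List.mem_map] at hm
    obtain ⟨x, _, rfl⟩ := hm
    rw [Finset.mem_range]
    have : w x ≤ n := by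
      calc w x ≤ (Finset.univ : Finset (Fin n)).card := Finset.card_filter_le _ _
      _ = n := by simp
    omega
  have hc := Finset.card_le_card hsub
  rw [List.toFinset_card_of_nodup hnd] at hc
  simpa using hc

lemma dec_bddAbove (f : (Fin n → Bool) → Bool) :
    BddAbove {m | ∃ X : List (Fin n → Bool), IsChain X ∧ decOn f X = m} := by
  rw [bddAbove_def]
  refine ⟨n + 1, ?_⟩
  rintro m ⟨X, hX, rfl⟩

  exact le_trans (decOn_le_length f X) (isChain_length_le hX)

lemma dec_le (f : (Fin n → Bool) → Bool) {k : ℕ}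
    (h : ∀ X : List (Fin n → Bool), IsChain X → decOn f X ≤ k) : dec f ≤ k := by
  have hne : {m | ∃ X : List (Fin n → Bool), IsChain X ∧ decOn f X = m}.Nonempty :=
    ⟨0, [], List.isChain_nil, rfl⟩
  apply csSup_le hne
  rintro m ⟨X, hX, rfl⟩
  exact h X hX

def bigOr : List (Formula n) → Formula n
  | [] => .const false
  | C :: l => .or C (bigOr l)

def bigAnd : List (Formula n) → Formula n
  | [] => .const true
  | C :: l => .and C (bigAnd l)

lemma bigOr_eval (x : Fin n → Bool) :
    ∀ l : List (Formula n), (bigOr l).eval x = l.any (fun C => C.eval x)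
  | [] => rfl
  | C :: l => by simp [bigOr, Formula.eval, bigOr_eval x l]

lemma bigAnd_eval (x : Fin n → Bool) :
    ∀ l : List (Formula n), (bigAnd l).eval x = l.all (fun C => C.eval x)
  | [] => rfl
  | C :: l => by simp [bigAnd, Formula.eval, bigAnd_eval x l]

lemma bigOr_notCount : ∀ l : List (Formula n),
    (∀ C ∈ l, C.notCount = 0) → (bigOr l).notCount = 0
  | [] => fun _ => rfl
  | C :: l => fun h => by
      have h1 := h C (List.mem_cons_self (a := C) (l := l))
      have h2 := bigOr_notCount l (fun D hD => h D (List.mem_cons_of_mem _ hD))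
      simp [bigOr, Formula.notCount, h1, h2]

lemma bigAnd_notCount : ∀ l : List (Formula n),
    (∀ C ∈ l, C.notCount = 0) → (bigAnd l).notCount = 0
  | [] => fun _ => rfl
  | C :: l => fun h => by
      have h1 := h C (List.mem_cons_self (a := C) (l := l))
      have h2 := bigAnd_notCount l (fun D hD => h D (List.mem_cons_of_mem _ hD))
      simp [bigAnd, Formula.notCount, h1, h2]

noncomputable def monoFormula (f : (Fin n → Bool) → Bool) : Formula n :=
  bigOr ((((Finset.univ : Finset (Fin n → Bool)).toList.filter (fun a => f a)).map
    (fun a => bigAnd (((List.finRange n).filter (fun i => a i)).map Formula.var))))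

lemma monoFormula_computes (f : (Fin n → Bool) → Bool)
    (hm : ∀ ⦃x y : Fin n → Bool⦄, x ≤ y → f x = true → f y = true) :
    (monoFormula f).Computes f := by
  intro x
  rw [monoFormula, bigOr_eval]
  by_cases hf : f x = true
  · rw [hf, List.any_eq_true]
    refine ⟨_, List.mem_map.mpr ⟨x, ?_, rfl⟩, ?_⟩
    · rw [List.mem_filter]
      exact ⟨Finset.mem_toList.mpr (Finset.mem_univ x), hf⟩
    · rw [bigAnd_eval, List.all_eq_true]
      rintro C hC
      rw [List.mem_map] at hC
      obtain ⟨i, hi, rfl⟩ := hC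
      rw [List.mem_filter] at hi
      simpa [Formula.eval] using hi.2
  · simp only [Bool.not_eq_true] at hf
    rw [hf]
    by_contra hany
    rw [Bool.not_eq_false, List.any_eq_true] at hany
    obtain ⟨C, hC, hCx⟩ := hany
    rw [List.mem_map] at hC
    obtain ⟨a, ha, rfl⟩ := hC
    rw [List.mem_filter] at ha
    have hax : a ≤ x := by
      rw [Pi.le_def]
      intro i
      by_cases hai : a i = true
      · rw [bigAnd_eval, List.all_eq_true] at hCx
        have hvar := hCx (Formula.var i)
          (List.mem_map.mpr ⟨i, List.mem_filter.mpr ⟨List.mem_finRange i, hai⟩, rfl⟩)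
        simp only [Formula.eval] at hvar
        rw [hai, hvar]
      · simp only [Bool.not_eq_true] at hai
        rw [hai]
        exact Bool.false_le _
    have := hm hax ha.2
    rw [hf] at this
    exact Bool.false_ne_true this

lemma monoFormula_notCount (f : (Fin n → Bool) → Bool) : (monoFormula f).notCount = 0 := by
  rw [monoFormula]
  apply bigOr_notCount
  intro C hC
  rw [List.mem_map] at hC
  obtain ⟨a, _, rfl⟩ := hC
  apply bigAnd_notCount
  intro D hD
  rw [List.mem_map] at hD
  obtain ⟨i, _, rfl⟩ := hD
  rfl

lemma exists_mono_formula (f : (Fin n → Bool) → Bool)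
    (hm : ∀ ⦃x y : Fin n → Bool⦄, x ≤ y → f x = true → f y = true) :
    ∃ C : Formula n, C.Computes f ∧ C.notCount = 0 :=
  ⟨monoFormula f, monoFormula_computes f hm, monoFormula_notCount f⟩

lemma startSet_upward {f : (Fin n → Bool) → Bool} {x y : Fin n → Bool}
    (hx : x ∈ startSet f) (hxy : x ≤ y) : y ∈ startSet f := by
  rcases eq_or_lt_of_le hxy with rfl | hlt
  · exact hx
  · intro X hX hhead
    cases X with
    | nil => simp at hhead
    | cons b t =>
      rw [List.head?_cons, Option.some.injEq] at hhead
      subst hhead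
      have hchain : IsChain (x :: b :: t) := List.isChain_cons_cons.mpr ⟨hlt, hX⟩
      have h0 : (if f x = true ∧ f b = false then 1 else 0) + decOn f (b :: t) = 0 :=
        hx (x :: b :: t) hchain rfl
      omega

lemma startSet_mono_f {f : (Fin n → Bool) → Bool} {x y : Fin n → Bool}
    (hx : x ∈ startSet f) (hxy : x ≤ y) (hfx : f x = true) : f y = true := by
  rcases eq_or_lt_of_le hxy with rfl | hlt
  · exact hfx
  · have hchain : IsChain [x, y] := List.isChain_cons_cons.mpr ⟨hlt, List.isChain_singleton y⟩
    have h0 : (if f x = true ∧ f y = false then 1 else 0) + decOn f [y] = 0 :=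
      hx [x, y] hchain rfl
    by_contra hfy
    simp only [Bool.not_eq_true] at hfy
    rw [if_pos ⟨hfx, hfy⟩] at h0
    omega

noncomputable def chiS (f : (Fin n → Bool) → Bool) (x : Fin n → Bool) : Bool :=
  if x ∈ startSet f then true else false

noncomputable def fS (f : (Fin n → Bool) → Bool) (x : Fin n → Bool) : Bool :=
  if x ∈ startSet f then f x else false

noncomputable def fUp (f : (Fin n → Bool) → Bool) (x : Fin n → Bool) : Bool :=
  if x ∈ startSet f then true else f x

lemma transfer {f : (Fin n → Bool) → Bool} {a b : Fin n → Bool} (hab : a ≤ b)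
    (ha : fUp f a = true) (hb : fUp f b = false) : f a = true ∧ f b = false := by
  unfold fUp at ha hb
  by_cases hbS : b ∈ startSet f
  · rw [if_pos hbS] at hb; exact absurd hb (by simp)
  · have haS : a ∉ startSet f := fun h => hbS (startSet_upward h hab)
    rw [if_neg haS] at ha
    rw [if_neg hbS] at hb
    exact ⟨ha, hb⟩

lemma fUp_false_not_mem {f : (Fin n → Bool) → Bool} {b : Fin n → Bool}
    (hb : fUp f b = false) : b ∉ startSet f := by
  intro hbS
  rw [fUp, if_pos hbS] at hb
  simp at hb

lemma exists_decrease {f : (Fin n → Bool) → Bool} {y : Fin n → Bool}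
    (hy : y ∉ startSet f) :
    ∃ Z : List (Fin n → Bool), IsChain Z ∧ Z.head? = some y ∧ 1 ≤ decOn f Z := by
  simp only [startSet, Set.mem_setOf_eq] at hy
  push_neg at hy
  obtain ⟨Z, h1, h2, h3⟩ := hy
  exact ⟨Z, h1, h2, Nat.one_le_iff_ne_zero.mpr h3⟩

lemma splice (f : (Fin n → Bool) → Bool) :
    ∀ X : List (Fin n → Bool), IsChain X → 1 ≤ decOn (fUp f) X →
    ∃ Y : List (Fin n → Bool), IsChain Y ∧ Y.head? = X.head? ∧
      decOn (fUp f) X + 1 ≤ decOn f Y := by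
  intro X
  induction X with
  | nil =>
    intro _ h
    exact absurd h (by simp [decOn])
  | cons a t ih =>
    cases t with
    | nil =>
      intro _ h
      exact absurd h (by simp [decOn])
    | cons b t' =>
      intro hch h1
      have hab : a < b := (List.isChain_cons_cons.mp hch).1
      have hbt : IsChain (b :: t') := (List.isChain_cons_cons.mp hch).2
      have heq : decOn (fUp f) (a :: b :: t')
          = (if fUp f a = true ∧ fUp f b = false then 1 else 0) + decOn (fUp f) (b :: t') := rfl
      by_cases hrest : 1 ≤ decOn (fUp f) (b :: t')
      · obtain ⟨Y, hYc, hYh, hle⟩ := ih hbt hrest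
        cases Y with
        | nil => simp at hYh
        | cons y0 rest =>
          simp only [List.head?_cons, Option.some.injEq] at hYh
          subst hYh
          refine ⟨a :: y0 :: rest, List.isChain_cons_cons.mpr ⟨hab, hYc⟩, rfl, ?_⟩
          have heqf : decOn f (a :: y0 :: rest)
              = (if f a = true ∧ f y0 = false then 1 else 0) + decOn f (y0 :: rest) := rfl
          have hδ : (if fUp f a = true ∧ fUp f y0 = false then 1 else 0)
              ≤ (if f a = true ∧ f y0 = false then 1 else 0) := by
            split
            · rename_i hcond
              obtain ⟨h1', h2'⟩ := transfer (le_of_lt hab) hcond.1 hcond.2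
              rw [if_pos ⟨h1', h2'⟩]
            · exact Nat.zero_le _
          omega
      · have hrest0 : decOn (fUp f) (b :: t') = 0 := by omega
        have hcond : fUp f a = true ∧ fUp f b = false := by
          by_contra hc
          rw [heq, if_neg hc, hrest0] at h1
          omega
        rw [if_pos hcond] at heq
        obtain ⟨hfa, hfb⟩ := transfer (le_of_lt hab) hcond.1 hcond.2
        obtain ⟨Z, hZc, hZh, hZ1⟩ := exists_decrease (fUp_false_not_mem hcond.2)
        cases Z with
        | nil => simp at hZh
        | cons z0 rest =>
          simp only [List.head?_cons, Option.some.injEq] at hZh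
          subst hZh
          refine ⟨a :: z0 :: rest, List.isChain_cons_cons.mpr ⟨hab, hZc⟩, rfl, ?_⟩
          have heqf : decOn f (a :: z0 :: rest)
              = (if f a = true ∧ f z0 = false then 1 else 0) + decOn f (z0 :: rest) := rfl
          rw [if_pos ⟨hfa, hfb⟩] at heqf
          omega

lemma dec_fUp_le {f : (Fin n → Bool) → Bool} (h1 : 1 ≤ dec f) :
    dec (fUp f) ≤ dec f - 1 := by
  apply dec_le
  intro X hX
  by_cases h : 1 ≤ decOn (fUp f) X
  · obtain ⟨Y, hYc, _, hle⟩ := splice f X hX h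
    have := decOn_le_dec f hYc
    omega
  · omega

lemma mono_of_dec_zero {f : (Fin n → Bool) → Bool} (h : dec f = 0) :
    ∀ ⦃x y : Fin n → Bool⦄, x ≤ y → f x = true → f y = true := by
  intro x y hxy hfx
  rcases eq_or_lt_of_le hxy with rfl | hlt
  · exact hfx
  · by_contra hfy
    simp only [Bool.not_eq_true] at hfy
    have hc : IsChain [x, y] := List.isChain_cons_cons.mpr ⟨hlt, List.isChain_singleton y⟩
    have hd := decOn_le_dec f hc
    have he : decOn f [x, y]
        = (if f x = true ∧ f y = false then 1 else 0) + decOn f [y] := rfl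
    rw [if_pos ⟨hfx, hfy⟩] at he
    have hz : decOn f [y] = 0 := rfl
    omega

lemma chiS_mono (f : (Fin n → Bool) → Bool) :
    ∀ ⦃x y : Fin n → Bool⦄, x ≤ y → chiS f x = true → chiS f y = true := by
  intro x y hxy hx
  rw [chiS] at hx ⊢
  by_cases hxS : x ∈ startSet f
  · rw [if_pos (startSet_upward hxS hxy)]
  · rw [if_neg hxS] at hx; exact absurd hx (by simp)

lemma fS_mono (f : (Fin n → Bool) → Bool) :
    ∀ ⦃x y : Fin n → Bool⦄, x ≤ y → fS f x = true → fS f y = true := by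
  intro x y hxy hx
  rw [fS] at hx ⊢
  by_cases hxS : x ∈ startSet f
  · rw [if_pos hxS] at hx
    rw [if_pos (startSet_upward hxS hxy)]
    exact startSet_mono_f hxS hxy hx
  · rw [if_neg hxS] at hx; exact absurd hx (by simp)

lemma main (n : ℕ) : ∀ (d : ℕ) (f : (Fin n → Bool) → Bool), dec f ≤ d →
    ∃ C : Formula n, C.Computes f ∧ C.notCount ≤ dec f := by
  intro d
  induction d with
  | zero =>
    intro f hf
    obtain ⟨C, hC, h0⟩ := exists_mono_formula f (mono_of_dec_zero (Nat.le_zero.mp hf))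
    exact ⟨C, hC, by omega⟩
  | succ d ih =>
    intro f hf
    by_cases h0 : dec f = 0
    · obtain ⟨C, hC, hc0⟩ := exists_mono_formula f (mono_of_dec_zero h0)
      exact ⟨C, hC, by omega⟩
    · have h1 : 1 ≤ dec f := Nat.one_le_iff_ne_zero.mpr h0
      obtain ⟨A, hA, hA0⟩ := exists_mono_formula (chiS f) (chiS_mono f)
      obtain ⟨B, hB, hB0⟩ := exists_mono_formula (fS f) (fS_mono f)
      have hfup : dec (fUp f) ≤ dec f - 1 := dec_fUp_le h1
      obtain ⟨C', hC', hC'n⟩ := ih (fUp f) (by omega)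
      refine ⟨.or (.and A B) (.and (.not A) C'), ?_, ?_⟩
      · intro x
        simp only [Formula.eval, hA x, hB x, hC' x]
        by_cases hx : x ∈ startSet f
        · simp [chiS, fS, fUp, if_pos hx]
        · simp [chiS, fS, fUp, if_neg hx]
      · simp only [Formula.notCount, hA0, hB0]
        omega

end Aux

/-- Upper bound: `d(f)` NOT operators suffice to represent `f` by a formula. -/
theorem formula_not_upper_bound (n : ℕ) (f : (Fin n → Bool) → Bool) :
    ∃ C : Formula n, C.Computes f ∧ C.notCount ≤ dec f := by
  exact main n (dec f) f le_rfl

end InversionComplexity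
end

section
/- For every Boolean function f : {0,1}^n → {0,1} and every Boolean formula C computing f, the number of NOT operators in C is at least d(f); that is, not(C) ≥ d(f). -/
namespace InversionComplexity

open Classical

/-- Count of increases along a sequence. -/
def incOn {n : ℕ} (f : (Fin n → Bool) → Bool) : List (Fin n → Bool) → ℕ
  | a :: b :: t => (if f a = false ∧ f b = true then 1 else 0) + incOn f (b :: t)
  | _ => 0

lemma decOn_not {n : ℕ} (f : (Fin n → Bool) → Bool) (X : List (Fin n → Bool)) :
    decOn (fun x => !f x) X = incOn f X := by
  induction X with
  | nil => rfl
  | cons a t ih =>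
    cases t with
    | nil => rfl
    | cons b t' =>
      simp only [decOn, incOn] at *
      rw [ih]
      rcases Bool.eq_false_or_eq_true (f a) with h1 | h1 <;>
        rcases Bool.eq_false_or_eq_true (f b) with h2 | h2 <;> simp [h1, h2]

lemma incOn_le {n : ℕ} (f : (Fin n → Bool) → Bool) (X : List (Fin n → Bool)) :
    incOn f X ≤ decOn f X + 1 ∧ (∀ a t, X = a :: t → f a = true → incOn f X ≤ decOn f X) := by
  induction X with
  | nil => exact ⟨Nat.zero_le _, by intro a t h; simp at h⟩
  | cons a t ih =>
    cases t with
    | nil =>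
      refine ⟨by simp [incOn, decOn], ?_⟩
      intro a' t' h _; simp [incOn, decOn]
    | cons b t' =>
      obtain ⟨ih1, ih2⟩ := ih
      have hb := ih2 b t' rfl
      simp only [decOn, incOn]
      rcases Bool.eq_false_or_eq_true (f a) with h1 | h1
      · rcases Bool.eq_false_or_eq_true (f b) with h2 | h2
        · have := hb h2
          simp only [h1, h2]
          constructor
          · simp; omega
          · intro _ _ _ _; simp; omega
        · simp only [h1, h2]
          constructor
          · simp; omega
          · intro _ _ _ _; simp; omega
      · rcases Bool.eq_false_or_eq_true (f b) with h2 | h2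
        · have := hb h2
          simp only [h1, h2]
          refine ⟨by simp; omega, ?_⟩
          intro a' t'' h ha
          have hh : a = a' := by injection h
          rw [← hh, h1] at ha; exact absurd ha (by simp)
        · simp only [h1, h2]
          refine ⟨by simpa using ih1, ?_⟩
          intro a' t'' h ha
          have hh : a = a' := by injection h
          rw [← hh, h1] at ha; exact absurd ha (by simp)

lemma decOn_and {n : ℕ} (f g : (Fin n → Bool) → Bool) (X : List (Fin n → Bool)) :
    decOn (fun x => f x && g x) X ≤ decOn f X + decOn g X := by
  induction X with
  | nil => exact Nat.zero_le _
  | cons a t ih =>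
    cases t with
    | nil => exact Nat.zero_le _
    | cons b t' =>
      simp only [decOn] at *
      have : (if (f a && g a) = true ∧ (f b && g b) = false then 1 else 0) ≤
          (if f a = true ∧ f b = false then 1 else 0) +
          (if g a = true ∧ g b = false then 1 else 0) := by
        cases f a <;> cases f b <;> cases g a <;> cases g b <;> simp
      omega

lemma decOn_or {n : ℕ} (f g : (Fin n → Bool) → Bool) (X : List (Fin n → Bool)) :
    decOn (fun x => f x || g x) X ≤ decOn f X + decOn g X := by
  induction X with
  | nil => exact Nat.zero_le _
  | cons a t ih =>
    cases t with
    | nil => exact Nat.zero_le _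
    | cons b t' =>
      simp only [decOn] at *
      have : (if (f a || g a) = true ∧ (f b || g b) = false then 1 else 0) ≤
          (if f a = true ∧ f b = false then 1 else 0) +
          (if g a = true ∧ g b = false then 1 else 0) := by
        cases f a <;> cases f b <;> cases g a <;> cases g b <;> simp
      omega

lemma decOn_mono {n : ℕ} (f : (Fin n → Bool) → Bool)
    (hf : ∀ x y : Fin n → Bool, x < y → f x = true → f y = true)
    (X : List (Fin n → Bool)) (hX : IsChain X) : decOn f X = 0 := by
  induction X with
  | nil => rfl
  | cons a t ih =>
    cases t with
    | nil => rfl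
    | cons b t' =>
      obtain ⟨hab, ht⟩ := List.isChain_cons_cons.mp hX
      simp only [decOn]
      rw [ih ht]
      have : ¬ (f a = true ∧ f b = false) := by
        rintro ⟨h1, h2⟩
        rw [hf a b hab h1] at h2; exact absurd h2 (by simp)
      simp [this]

lemma decOn_formula {n : ℕ} (C : Formula n) (X : List (Fin n → Bool)) (hX : IsChain X) :
    decOn (fun x => C.eval x) X ≤ C.notCount := by
  induction C generalizing X with
  | var i =>
    have hm : ∀ x y : Fin n → Bool, x < y →
        (Formula.var (n := n) i).eval x = true → (Formula.var (n := n) i).eval y = true := by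
      intro x y hxy h
      simp only [Formula.eval] at *
      have := hxy.1 i
      rw [h] at this
      exact Bool.eq_true_of_true_le this
    rw [decOn_mono _ hm X hX]
    exact Nat.zero_le _
  | const b =>
    have hm : ∀ x y : Fin n → Bool, x < y →
        (Formula.const (n := n) b).eval x = true → (Formula.const (n := n) b).eval y = true :=
      fun _ _ _ h => h
    rw [decOn_mono _ hm X hX]
    exact Nat.zero_le _
  | and D E ihD ihE =>
    calc decOn (fun x => (D.and E).eval x) X ≤ _ + _ := decOn_and _ _ X
    _ ≤ D.notCount + E.notCount := Nat.add_le_add (ihD X hX) (ihE X hX)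
  | or D E ihD ihE =>
    calc decOn (fun x => (D.or E).eval x) X ≤ _ + _ := decOn_or _ _ X
    _ ≤ D.notCount + E.notCount := Nat.add_le_add (ihD X hX) (ihE X hX)
  | not D ihD =>
    have h1 : decOn (fun x => (D.not).eval x) X = incOn (fun x => D.eval x) X :=
      decOn_not _ X
    have h2 := (incOn_le (fun x => D.eval x) X).1
    have h3 := ihD X hX
    simp only [Formula.notCount]
    omega

/-- Lower bound: every formula computing `f` has at least `d(f)` NOT operators. -/
theorem formula_not_lower_bound (n : ℕ) (f : (Fin n → Bool) → Bool)
    (C : Formula n) (hC : C.Computes f) :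
    dec f ≤ C.notCount := by
  have hf : f = fun x => C.eval x := by funext x; exact (hC x).symm
  apply csSup_le
  · exact ⟨0, [], List.isChain_nil, rfl⟩
  · rintro m ⟨X, hX, rfl⟩
    rw [hf]
    exact decOn_formula C X hX

end InversionComplexity
end

section
/- Let C be a Boolean formula computing a Boolean function f : {0,1}^n → {0,1}, and let x, x' ∈ {0,1}^n with x < x', f(x) = 1 and f(x') = 0. Then not_d(C, x') − not_d(C, x) ≥ 1, where not_d(C, y) is the number of NOT nodes of C whose state is down on input y. -/
namespace InversionComplexity

open Classical

lemma notDown_key {n : ℕ} (C : Formula n) (x x' : Fin n → Bool) (hle : x ≤ x') :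
    C.notDown x + (if C.eval x = true ∧ C.eval x' = false then 1 else 0) ≤ C.notDown x' := by
  induction C with
  | var i =>
    simp only [Formula.eval, Formula.notDown]
    have := hle i
    rcases Bool.eq_false_or_eq_true (x i) with h | h <;>
      rcases Bool.eq_false_or_eq_true (x' i) with h' | h' <;>
      simp_all <;> exact absurd this (by simp [Bool.le_iff_imp])
  | const b => simp [Formula.eval, Formula.notDown]
  | and D E ihD ihE =>
    simp only [Formula.eval, Formula.notDown]
    have h1 := ihD; have h2 := ihE
    rcases Bool.eq_false_or_eq_true (D.eval x) with hdx | hdx <;>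
      rcases Bool.eq_false_or_eq_true (E.eval x) with hex | hex <;>
      rcases Bool.eq_false_or_eq_true (D.eval x') with hdx' | hdx' <;>
      rcases Bool.eq_false_or_eq_true (E.eval x') with hex' | hex' <;>
      simp_all <;> omega
  | or D E ihD ihE =>
    simp only [Formula.eval, Formula.notDown]
    have h1 := ihD; have h2 := ihE
    rcases Bool.eq_false_or_eq_true (D.eval x) with hdx | hdx <;>
      rcases Bool.eq_false_or_eq_true (E.eval x) with hex | hex <;>
      rcases Bool.eq_false_or_eq_true (D.eval x') with hdx' | hdx' <;>
      rcases Bool.eq_false_or_eq_true (E.eval x') with hex' | hex' <;>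
      simp_all <;> omega
  | not D ihD =>
    simp only [Formula.eval, Formula.notDown]
    rcases Bool.eq_false_or_eq_true (D.eval x) with hdx | hdx <;>
      rcases Bool.eq_false_or_eq_true (D.eval x') with hdx' | hdx' <;>
      simp_all <;> omega

/-- If `x < x'`, `f x = 1` and `f x' = 0`, then the number of NOT nodes of a
formula `C` computing `f` in the down state increases by at least one, i.e.
`not_d(C, x') - not_d(C, x) ≥ 1`. -/
theorem notDown_increases (n : ℕ) (f : (Fin n → Bool) → Bool)
    (C : Formula n) (hC : C.Computes f) (x x' : Fin n → Bool)
    (hlt : x < x') (h1 : f x = true) (h0 : f x' = false) :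
    C.notDown x + 1 ≤ C.notDown x' := by
  have := notDown_key C x x' hlt.le
  rw [hC x, hC x'] at this
  simpa [h1, h0] using this

end InversionComplexity
end

section
/- Let C be a Boolean formula computing a Boolean function f : {0,1}^n → {0,1}, and let X = (x^1 < x^2 < ⋯ < x^k) be any chain in {0,1}^n. Then not_d(C, x^k) − not_d(C, x^1) ≥ d_X(f). In particular, taking a chain with d_X(f) = d(f), C contains at least d(f) NOT nodes. -/
namespace InversionComplexity

open Classical

lemma notDown_le_notCount {n : ℕ} (C : Formula n) (x : Fin n → Bool) :
    C.notDown x ≤ C.notCount := by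
  induction C with
  | var i => simp [Formula.notDown, Formula.notCount]
  | const b => simp [Formula.notDown, Formula.notCount]
  | and A B ihA ihB => simp [Formula.notDown, Formula.notCount]; omega
  | or A B ihA ihB => simp [Formula.notDown, Formula.notCount]; omega
  | not A ihA =>
      simp only [Formula.notDown, Formula.notCount]
      split <;> omega

lemma notDown_mono {n : ℕ} (C : Formula n) (x y : Fin n → Bool) (hxy : x ≤ y) :
    C.notDown x + (if C.eval x = true ∧ C.eval y = false then 1 else 0) ≤ C.notDown y := by
  induction C with
  | var i =>
      simp only [Formula.notDown, Formula.eval]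
      have := hxy i
      by_cases h : x i = true ∧ y i = false
      · rw [h.1, h.2] at this; exact absurd this (by decide : ¬ (true : Bool) ≤ false)
      · exact (fun (p : Prop) (_ : Decidable p) (hp : ¬p) => (by simp [hp] : (0 + if p then 1 else 0) ≤ 0)) _ _ h
  | const b => simp [Formula.notDown, Formula.eval]
  | and A B ihA ihB =>
      simp only [Formula.notDown, Formula.eval] at *
      rcases (A.eval x).eq_false_or_eq_true with hA | hA <;>
        rcases (B.eval x).eq_false_or_eq_true with hB | hB <;>
        rcases (A.eval y).eq_false_or_eq_true with hA' | hA' <;>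
        rcases (B.eval y).eq_false_or_eq_true with hB' | hB' <;>
        simp_all <;> omega
  | or A B ihA ihB =>
      simp only [Formula.notDown, Formula.eval] at *
      rcases (A.eval x).eq_false_or_eq_true with hA | hA <;>
        rcases (B.eval x).eq_false_or_eq_true with hB | hB <;>
        rcases (A.eval y).eq_false_or_eq_true with hA' | hA' <;>
        rcases (B.eval y).eq_false_or_eq_true with hB' | hB' <;>
        simp_all <;> omega
  | not A ihA =>
      simp only [Formula.notDown, Formula.eval] at *
      rcases (A.eval x).eq_false_or_eq_true with hA | hA <;>
        rcases (A.eval y).eq_false_or_eq_true with hA' | hA' <;>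
        simp_all <;> omega

lemma chain_bound {n : ℕ} (f : (Fin n → Bool) → Bool) (C : Formula n)
    (hC : C.Computes f) :
    ∀ X : List (Fin n → Bool), IsChain X → ∀ hne : X ≠ [],
      C.notDown (X.head hne) + decOn f X ≤ C.notDown (X.getLast hne)
  | [] => by intro _ hne; simp at hne
  | [a] => by intro _ hne; simp [decOn]
  | a :: b :: t => by
      intro hX hne
      have hab : a < b := (List.isChain_cons_cons.mp hX).1
      have ih := chain_bound f C hC (b :: t) (List.isChain_cons_cons.mp hX).2 (by simp)
      have key := notDown_mono C a b hab.le
      rw [hC a, hC b] at key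
      have hlast : (a :: b :: t).getLast hne = (b :: t).getLast (by simp) :=
        List.getLast_cons _
      rw [hlast]
      simp only [decOn, List.head] at *
      omega

/-- Along any chain `X = (x^1 < ⋯ < x^k)`,
`not_d(C, x^k) - not_d(C, x^1) ≥ d_X(f)`; in particular, a formula `C`
computing `f` contains at least `d(f)` NOT nodes. -/
theorem notDown_chain_lower_bound (n : ℕ) (f : (Fin n → Bool) → Bool)
    (C : Formula n) (hC : C.Computes f)
    (X : List (Fin n → Bool)) (hX : IsChain X) (hne : X ≠ []) :
    C.notDown (X.head hne) + decOn f X ≤ C.notDown (X.getLast hne) ∧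
    dec f ≤ C.notCount := by
  refine ⟨chain_bound f C hC X hX hne, ?_⟩
  apply csSup_le
  · exact ⟨0, [], by simp [IsChain, decOn, List.Chain']⟩
  · rintro m ⟨Y, hY, rfl⟩
    rcases Y with _ | ⟨a, Y⟩
    · simp [decOn]
    · have h := chain_bound f C hC (a :: Y) hY (by simp)
      have := notDown_le_notCount C ((a :: Y).getLast (by simp))
      omega

end InversionComplexity
end
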